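/- Let A be a ℤ₂-graded Poisson algebra with even bracket {·,·}, and let S, 𝒬 be odd elements defining an odd Jacobi structure: {𝒬,𝒬} = 0, {𝒬,S} = 0, {S,S} = -2𝒬S. Let 𝒳 be an even element with {𝒳,S} = 0 and {𝒳,𝒬} = 0 (a Jacobi vector field). Then for the odd Jacobi bracket [f,g]_J := (-1)^{|f|+1}{{S,f},g} - (-1)^{|f|+1}{𝒬,fg} on an abelian Poisson subalgebra A₀ preserved by {𝒳,·}, the operator X := {𝒳,·} is a derivation of [·,·]_J: X([f,g]_J) = [X(f),g]_J + [f,X(g)]_J for all homogeneous f, g ∈ A₀. -/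
import Mathlib


/-- The odd Jacobi bracket `[f,g]_J = (-1)^{|f|+1}({{S,f},g} - {𝒬,fg})` determined by an
odd Jacobi structure `(S,𝒬)` inside a graded Poisson algebra, for `f` of parity `i`. -/
def brJ {P : Type*} [Ring P] [Algebra ℝ P] (pb : P → P → P) (S 𝒬 : P)
    (i : ZMod 2) (f g : P) : P :=
  ((-1 : ℝ) ^ (i.val + 1)) • (pb (pb S f) g - pb 𝒬 (f * g))

/-- If `𝒳` is the (even) symbol of a Jacobi vector field, i.e. `{𝒳,S} = 0` and
`{𝒳,𝒬} = 0`, then `X = {𝒳,·}` is a derivation of the odd Jacobi bracket. -/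
theorem jacobi_field_derivation
    {P : Type*} [Ring P] [Algebra ℝ P]
    (Pg : ZMod 2 → Submodule ℝ P)
    (hone : (1 : P) ∈ Pg 0)
    (hmulg : ∀ (i j : ZMod 2) (a b : P), a ∈ Pg i → b ∈ Pg j → a * b ∈ Pg (i + j))
    (hscomm : ∀ (i j : ZMod 2) (a b : P), a ∈ Pg i → b ∈ Pg j →
      a * b = ((-1 : ℝ) ^ (i.val * j.val)) • (b * a))
    (pb : P → P → P)
    (hpbaddl : ∀ a b c : P, pb (a + b) c = pb a c + pb b c)
    (hpbaddr : ∀ a b c : P, pb a (b + c) = pb a b + pb a c)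
    (hpbsmull : ∀ (r : ℝ) (a b : P), pb (r • a) b = r • pb a b)
    (hpbsmulr : ∀ (r : ℝ) (a b : P), pb a (r • b) = r • pb a b)
    (hpbgrade : ∀ (i j : ZMod 2) (a b : P), a ∈ Pg i → b ∈ Pg j → pb a b ∈ Pg (i + j))
    (hpbskew : ∀ (i j : ZMod 2) (a b : P), a ∈ Pg i → b ∈ Pg j →
      pb a b = -(((-1 : ℝ) ^ (i.val * j.val)) • pb b a))
    (hpbjac : ∀ (i j : ZMod 2) (a b c : P), a ∈ Pg i → b ∈ Pg j →
      pb a (pb b c) = pb (pb a b) c + ((-1 : ℝ) ^ (i.val * j.val)) • pb b (pb a c))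
    (hpbleib : ∀ (i j : ZMod 2) (a b c : P), a ∈ Pg i → b ∈ Pg j →
      pb a (b * c) = pb a b * c + ((-1 : ℝ) ^ (i.val * j.val)) • (b * pb a c))
    (S 𝒬 : P) (hS : S ∈ Pg 1) (h𝒬 : 𝒬 ∈ Pg 1)
    (h𝒬𝒬 : pb 𝒬 𝒬 = 0) (h𝒬S : pb 𝒬 S = 0)
    (hSS : pb S S = -((2 : ℝ) • (𝒬 * S)))
    (A₀ : Subalgebra ℝ P)
    (habelian : ∀ f g : P, f ∈ A₀ → g ∈ A₀ → pb f g = 0)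
    (h𝒬cl : ∀ f : P, f ∈ A₀ → pb 𝒬 f ∈ A₀)
    (hScl : ∀ f g : P, f ∈ A₀ → g ∈ A₀ → pb (pb S f) g ∈ A₀)
    (𝒳 : P) (h𝒳 : 𝒳 ∈ Pg 0)
    (h𝒳S : pb 𝒳 S = 0) (h𝒳𝒬 : pb 𝒳 𝒬 = 0)
    (h𝒳cl : ∀ f : P, f ∈ A₀ → pb 𝒳 f ∈ A₀) :
    ∀ (i j : ZMod 2) (f g : P), f ∈ A₀ → g ∈ A₀ → f ∈ Pg i → g ∈ Pg j →
      pb 𝒳 (brJ pb S 𝒬 i f g)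
        = brJ pb S 𝒬 i (pb 𝒳 f) g + brJ pb S 𝒬 i f (pb 𝒳 g) := by
  intro i j f g hfA hgA hf hg
  have hzero : ∀ b : P, pb 0 b = 0 := by
    intro b
    have h := hpbsmull 0 b b
    simpa using h
  have hsub : ∀ a b c : P, pb a (b - c) = pb a b - pb a c := by
    intro a b c
    have h := hpbaddr a c (b - c)
    rw [add_sub_cancel] at h
    exact (eq_sub_of_add_eq' h.symm)
  have hSf : pb S f ∈ Pg (1 + i) := hpbgrade 1 i S f hS hf
  have h1 : pb 𝒳 (pb S f) = pb S (pb 𝒳 f) := by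
    rw [hpbjac 0 1 𝒳 S f h𝒳 hS, h𝒳S, hzero, zero_add]
    simp
  have h2 : pb 𝒳 (pb (pb S f) g) = pb (pb S (pb 𝒳 f)) g + pb (pb S f) (pb 𝒳 g) := by
    rw [hpbjac 0 (1 + i) 𝒳 (pb S f) g h𝒳 hSf, h1]
    simp
  have h3 : pb 𝒳 (f * g) = pb 𝒳 f * g + f * pb 𝒳 g := by
    rw [hpbleib 0 i 𝒳 f g h𝒳 hf]
    simp
  have h4 : pb 𝒳 (pb 𝒬 (f * g)) = pb 𝒬 (pb 𝒳 f * g) + pb 𝒬 (f * pb 𝒳 g) := by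
    rw [hpbjac 0 1 𝒳 𝒬 (f * g) h𝒳 h𝒬, h𝒳𝒬, hzero, zero_add, h3, hpbaddr]
    simp
  unfold brJ
  rw [hpbsmulr, hsub, h2, h4]
  module
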